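/- Let a < b be coprime positive integers (so that b − a < b is also coprime to b). Every diagonal of P_{b+1} is either a,b-admissible or (b−a),b-admissible, but not both. In other words, the set of a,b-admissible diagonals and the set of (b−a),b-admissible diagonals partition the set of all diagonals of P_{b+1}. -/

import Mathlib

/-- `S(a,b) = { ⌊ib/a⌋ : i = 1, …, a-1 }`. -/
def Sab (a b : ℕ) : Finset ℕ := (Finset.Icc 1 (a - 1)).image (fun i => i * b / a)

/-- A diagonal of the polygon `P_{b+1}` with boundary points `0, 1, …, b`:
a pair `i < j` with `j - i ≥ 2` and `(i, j) ≠ (0, b)`. -/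
def IsDiagonal (b i j : ℕ) : Prop := i + 2 ≤ j ∧ j ≤ b ∧ ¬(i = 0 ∧ j = b)

/-- A diagonal `ij` is `a,b`-admissible if it separates `j - i - 1` and `b - j + i`
boundary points, both of which lie in `S(a,b)`. -/
def Admissible (a b : ℕ) (d : ℕ × ℕ) : Prop :=
  IsDiagonal b d.1 d.2 ∧ d.2 - d.1 - 1 ∈ Sab a b ∧ b - d.2 + d.1 ∈ Sab a b

/-- Two diagonals `ij` and `km` cross if `i < k < j < m` or `k < i < m < j`. -/
def Crosses (d d' : ℕ × ℕ) : Prop :=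
  (d.1 < d'.1 ∧ d'.1 < d.2 ∧ d.2 < d'.2) ∨ (d'.1 < d.1 ∧ d.1 < d'.2 ∧ d'.2 < d.2)

/-- An `a,b`-Dyck path: a north/east lattice path from `(0,0)` to `(b,a)` staying weakly
above `y = (a/b) x`.  It is encoded by the height `h u` of its unique east step over the
column interval `[u, u+1]`, for `0 ≤ u < b`; we normalize `h u = a` for `u ≥ b`. -/
structure DyckPath (a b : ℕ) where
  h : ℕ → ℕ
  mono : Monotone h
  norm : ∀ x, b ≤ x → h x = a
  above : ∀ x, x < b → a * (x + 1) ≤ b * h x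

/-- The lattice point `(x, y)` lies on `D` at the bottom of a north step of `D`. -/
def BottomNorth (a b : ℕ) (D : DyckPath a b) (x y : ℕ) : Prop :=
  x ≤ b ∧ (if x = 0 then 0 else D.h (x - 1)) ≤ y ∧ y < D.h x

/-- The laser of slope `a/b` fired northeast from the lattice point `(x, y)` of `D` first
hits `D` in the interior of the east step whose right endpoint has `x`-coordinate `k`;
the associated laser diagonal is `d(P) = (x, k)`.  The laser passes strictly below the
right endpoint of every earlier east step and strictly above the one it hits. -/
def IsLaserDiag (a b : ℕ) (D : DyckPath a b) (x y k : ℕ) : Prop :=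
  x < k ∧ k ≤ b ∧ b * D.h (k - 1) < b * y + a * (k - x) ∧
    ∀ u, x ≤ u → u + 1 < k → b * y + a * (u + 1 - x) < b * D.h u

/-- `F(D)`: the set of laser diagonals `d(P)` of the lattice points `P ≠ (0,0)` at the
bottoms of north steps of `D`. -/
def FD (a b : ℕ) (D : DyckPath a b) : Set (ℕ × ℕ) :=
  { d | ∃ y, BottomNorth a b D d.1 y ∧ (d.1, y) ≠ (0, 0) ∧ IsLaserDiag a b D d.1 y d.2 }

/-- A finite abstract simplicial complex on the ground set `E`: a downward closed
collection of finite subsets of `E`. -/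
structure AbsCplx (E : Type*) where
  faces : Set (Finset E)
  down : ∀ F ∈ faces, ∀ F' ⊆ F, F' ∈ faces

/-- The rational associahedron `Âss(a,b)`: faces are the sets of pairwise noncrossing
`a,b`-admissible diagonals. -/
def hatAss (a b : ℕ) : AbsCplx (ℕ × ℕ) where
  faces := { F | (∀ d ∈ F, Admissible a b d) ∧ ∀ d ∈ F, ∀ d' ∈ F, ¬Crosses d d' }
  down := fun F hF F' hsub =>
    ⟨fun d hd => hF.1 d (hsub hd), fun d hd d' hd' => hF.2 d (hsub hd) d' (hsub hd')⟩

/-- The rational associahedron `Ass(a,b)`: faces are the subsets of the sets `F(D)`,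
as `D` ranges over `a,b`-Dyck paths. -/
def Ass (a b : ℕ) : AbsCplx (ℕ × ℕ) where
  faces := { F | ∃ D : DyckPath a b, ∀ d ∈ F, d ∈ FD a b D }
  down := fun F hF F' hsub =>
    let ⟨D, hD⟩ := hF
    ⟨D, fun d hd => hD d (hsub hd)⟩

/-- Every diagonal of `P_{b+1}` is either `a,b`-admissible or `(b-a),b`-admissible, but
not both. -/

lemma mod_ne_zero' {a b s : ℕ} (hcop : Nat.Coprime a b) (hs1 : 0 < s) (hs2 : s < b) :
    a * s % b ≠ 0 := by
  intro h
  have : b ∣ s := hcop.symm.dvd_of_dvd_mul_left (Nat.dvd_of_mod_eq_zero h)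
  have := Nat.le_of_dvd hs1 this
  omega


lemma mem_Sab_iff' {a b : ℕ} (ha : 0 < a) (hab : a < b) (hcop : Nat.Coprime a b)
    {s : ℕ} (hs1 : 1 ≤ s) (hs2 : s + 2 ≤ b) :
    s ∈ Sab a b ↔ b - a < a * s % b := by
  unfold Sab
  constructor
  · intro hmem
    obtain ⟨i, hi, rfl⟩ := Finset.mem_image.mp hmem
    rw [Finset.mem_Icc] at hi
    have h1 : a * (i * b / a) + i * b % a = i * b := Nat.div_add_mod (i * b) a
    have hrlt : i * b % a < a := Nat.mod_lt _ ha
    have hr : i * b % a ≠ 0 := by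
      intro h
      have hdvd : a ∣ i * b := Nat.dvd_of_mod_eq_zero h
      have : a ∣ i := hcop.dvd_of_dvd_mul_right hdvd
      have := Nat.le_of_dvd (by omega) this
      omega
    set r := i * b % a with hrdef
    have e1 : a * (i * b / a) + r ≡ (b - r) + r [MOD b] := by
      rw [h1, show (b - r) + r = b by omega]
      exact (Nat.modEq_zero_iff_dvd.mpr ⟨i, mul_comm i b⟩).trans
        (Nat.modEq_zero_iff_dvd.mpr dvd_rfl).symm
    have e2 : a * (i * b / a) ≡ b - r [MOD b] := Nat.ModEq.add_right_cancel' r e1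
    have e3 : a * (i * b / a) % b = (b - r) % b := e2
    rw [Nat.mod_eq_of_lt (by omega : b - r < b)] at e3
    omega
  · intro hm
    have hmlt : a * s % b < b := Nat.mod_lt _ (by omega)
    have hm0 : a * s % b ≠ 0 := mod_ne_zero' hcop (by omega) (by omega)
    set m := a * s % b with hmdef
    set r := b - m with hrdef
    have e1 : a * s + r ≡ m + r [MOD b] := (Nat.mod_modEq (a * s) b).symm.add_right r
    have hdvd : b ∣ a * s + r := by
      refine Nat.modEq_zero_iff_dvd.mp (e1.trans ?_)
      rw [show m + r = b by omega]
      exact Nat.modEq_zero_iff_dvd.mpr dvd_rfl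
    obtain ⟨k, hk⟩ := hdvd
    have hk1 : 1 ≤ k := by
      rcases Nat.eq_zero_or_pos k with rfl | h
      · simp at hk; omega
      · exact h
    have hklt : k < a := by
      have hlt : b * k < b * a := by
        calc b * k = a * s + r := hk.symm
          _ < a * s + a := by omega
          _ = a * (s + 1) := by ring
          _ < a * b := mul_lt_mul_of_pos_left (by omega) ha
          _ = b * a := mul_comm a b
      exact Nat.lt_of_mul_lt_mul_left hlt
    refine Finset.mem_image.mpr ⟨k, Finset.mem_Icc.mpr ⟨hk1, by omega⟩, ?_⟩
    have hkb : k * b = a * s + r := by rw [mul_comm]; exact hk.symm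
    rw [hkb, Nat.mul_add_div ha, Nat.div_eq_of_lt (by omega), add_zero]

lemma sum_mod_eq' {a b s t : ℕ} (ha : 0 < a) (hab : a < b) (hst : s + t + 1 = b) :
    a * s % b + a * t % b = b - a ∨ a * s % b + a * t % b = 2 * b - a := by
  have hb : 0 < b := by omega
  have h1 : a * s + a * t + a = b * a := by
    calc a * s + a * t + a = a * (s + t + 1) := by ring
    _ = a * b := by rw [hst]
    _ = b * a := mul_comm a b
  have e2 : a * s % b + a * t % b + a ≡ 0 [MOD b] := by
    refine (((Nat.mod_modEq (a*s) b).add (Nat.mod_modEq (a*t) b)).add_right a).trans ?_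
    rw [h1]
    exact Nat.modEq_zero_iff_dvd.mpr ⟨a, rfl⟩
  obtain ⟨k, hk⟩ := Nat.modEq_zero_iff_dvd.mp e2
  have hm1 : a * s % b < b := Nat.mod_lt _ hb
  have hm2 : a * t % b < b := Nat.mod_lt _ hb
  have hk3 : k < 3 := by
    have h3 : b * k < b * 3 := by rw [← hk]; omega
    exact Nat.lt_of_mul_lt_mul_left h3
  interval_cases k <;> omega

lemma comp_mod_eq' {a b s : ℕ} (ha : 0 < a) (hab : a < b) (hm : a * s % b ≠ 0) :
    (b - a) * s % b + a * s % b = b := by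
  have hb : 0 < b := by omega
  have h1 : (b - a) * s + a * s = b * s := by
    rw [← Nat.add_mul, Nat.sub_add_cancel (le_of_lt hab)]
  have e1 : (b - a) * s % b + a * s % b ≡ 0 [MOD b] := by
    refine ((Nat.mod_modEq ((b-a)*s) b).add (Nat.mod_modEq (a*s) b)).trans ?_
    rw [h1]
    exact Nat.modEq_zero_iff_dvd.mpr ⟨s, rfl⟩
  obtain ⟨k, hk⟩ := Nat.modEq_zero_iff_dvd.mp e1
  have hm1 : (b - a) * s % b < b := Nat.mod_lt _ hb
  have hm2 : a * s % b < b := Nat.mod_lt _ hb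
  have hk2 : k < 2 := by
    have h3 : b * k < b * 2 := by rw [← hk]; omega
    exact Nat.lt_of_mul_lt_mul_left h3
  interval_cases k <;> omega

lemma mod_ne_sub' {a b s : ℕ} (ha : 0 < a) (hab : a < b) (hcop : Nat.Coprime a b)
    (hs2 : s + 2 ≤ b) : a * s % b ≠ b - a := by
  intro h
  have e1 : a * s + a ≡ (b - a) + a [MOD b] := by
    have := (Nat.mod_modEq (a*s) b).symm.add_right a
    rwa [h] at this
  have e2 : a * s + a ≡ 0 [MOD b] := e1.trans (by
    rw [Nat.sub_add_cancel (le_of_lt hab)]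
    exact Nat.modEq_zero_iff_dvd.mpr dvd_rfl)
  have hdvd : b ∣ a * (s + 1) := by
    have := Nat.modEq_zero_iff_dvd.mp e2
    rwa [show a * s + a = a * (s + 1) by ring] at this
  have : b ∣ s + 1 := hcop.symm.dvd_of_dvd_mul_left hdvd
  have := Nat.le_of_dvd (by omega) this
  omega

theorem admissible_xor_complement (a b : ℕ) (ha : 0 < a) (hab : a < b)
    (hcop : Nat.Coprime a b) (i j : ℕ) (hd : IsDiagonal b i j) :
    Xor' (Admissible a b (i, j)) (Admissible (b - a) b (i, j)) := by
  obtain ⟨h1, h2, h3⟩ := hd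
  have hs1 : 1 ≤ j - i - 1 := by omega
  have hs2 : (j - i - 1) + 2 ≤ b := by omega
  have ht1 : 1 ≤ b - j + i := by omega
  have ht2 : (b - j + i) + 2 ≤ b := by omega
  have hst : (j - i - 1) + (b - j + i) + 1 = b := by omega
  have hba : 0 < b - a := by omega
  have hba2 : b - a < b := by omega
  have hcop' : Nat.Coprime (b - a) b := (Nat.coprime_self_sub_left (le_of_lt hab)).mpr hcop
  have hA : Admissible a b (i, j) ↔
      (b - a < a * (j - i - 1) % b ∧ b - a < a * (b - j + i) % b) := by
    rw [show Admissible a b (i, j) ↔ ((j - i - 1) ∈ Sab a b ∧ (b - j + i) ∈ Sab a b) from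
      ⟨fun ⟨_, hy, hz⟩ => ⟨hy, hz⟩, fun ⟨hy, hz⟩ => ⟨⟨h1, h2, h3⟩, hy, hz⟩⟩,
      mem_Sab_iff' ha hab hcop hs1 hs2, mem_Sab_iff' ha hab hcop ht1 ht2]
  have hB : Admissible (b - a) b (i, j) ↔
      (b - (b - a) < (b - a) * (j - i - 1) % b ∧ b - (b - a) < (b - a) * (b - j + i) % b) := by
    rw [show Admissible (b - a) b (i, j) ↔
        ((j - i - 1) ∈ Sab (b - a) b ∧ (b - j + i) ∈ Sab (b - a) b) from
      ⟨fun ⟨_, hy, hz⟩ => ⟨hy, hz⟩, fun ⟨hy, hz⟩ => ⟨⟨h1, h2, h3⟩, hy, hz⟩⟩,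
      mem_Sab_iff' hba hba2 hcop' hs1 hs2, mem_Sab_iff' hba hba2 hcop' ht1 ht2]
  have hms0 : a * (j - i - 1) % b ≠ 0 := mod_ne_zero' hcop (by omega) (by omega)
  have hmt0 : a * (b - j + i) % b ≠ 0 := mod_ne_zero' hcop (by omega) (by omega)
  have hsum := sum_mod_eq' ha hab hst
  have hcs := comp_mod_eq' ha hab hms0
  have hct := comp_mod_eq' ha hab hmt0
  have hne := mod_ne_sub' ha hab hcop hs2
  have hm1 : a * (j - i - 1) % b < b := Nat.mod_lt _ (by omega)
  have hm2 : a * (b - j + i) % b < b := Nat.mod_lt _ (by omega)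
  rw [hA, hB, Xor']
  generalize a * (j - i - 1) % b = ms at *
  generalize a * (b - j + i) % b = mt at *
  generalize (b - a) * (j - i - 1) % b = us at *
  generalize (b - a) * (b - j + i) % b = ut at *
  unfold Xor
  omega
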